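/- Let G be a k-uniform hypergraph (k ≥ 2) of order n without isolated vertices. Then the hypergraph sum-diameter satisfies sd(G) ≥ n + k(k-1)/2 - 1. -/

import Mathlib

/-- The sum graph induced by a finite set `L` of integers: vertices are the elements of `L`,
with distinct `u, v` adjacent iff `u + v ∈ L`. -/
def sumGraph (L : Finset ℤ) : SimpleGraph {x : ℤ // x ∈ L} :=
  SimpleGraph.fromRel (fun a b => (a : ℤ) + b ∈ L)

/-- `L` induces the graph `G` together with some isolated vertices:
there is an injective labeling `f` of the vertices of `G` by elements of `L` such that
adjacency in `G` corresponds exactly to the sum condition, and every label not used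
for a vertex of `G` is isolated in the induced sum graph. -/
def IsSumLabeling {V : Type*} (G : SimpleGraph V) (L : Finset ℤ) : Prop :=
  ∃ f : V → ℤ, Function.Injective f ∧ (∀ v, f v ∈ L) ∧
    (∀ u v : V, G.Adj u v ↔ (f u ≠ f v ∧ f u + f v ∈ L)) ∧
    (∀ a ∈ L, a ∉ Set.range f → ∀ b ∈ L, b ≠ a → a + b ∉ L)

/-- The sum-diameter of `G`: the minimum of `max L - min L` over finite sets `L` of
positive integers whose induced sum graph is `G` plus isolated vertices. -/
noncomputable def sumDiam {V : Type*} (G : SimpleGraph V) : ℕ :=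
  sInf {d | ∃ L : Finset ℤ, (∀ x ∈ L, 0 < x) ∧ IsSumLabeling G L ∧
    ∃ hL : L.Nonempty, (L.max' hL - L.min' hL).toNat = d}

/-- The integral sum-diameter of `G`: labels may be arbitrary integers. -/
noncomputable def intSumDiam {V : Type*} (G : SimpleGraph V) : ℕ :=
  sInf {d | ∃ L : Finset ℤ, IsSumLabeling G L ∧
    ∃ hL : L.Nonempty, (L.max' hL - L.min' hL).toNat = d}

/-- The sum number `σ(G)`: minimum number of isolated vertices that must be added to `G`
to obtain a sum graph. -/
noncomputable def sumNumber {V : Type*} [Fintype V] (G : SimpleGraph V) : ℕ :=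
  sInf {k | ∃ L : Finset ℤ, (∀ x ∈ L, 0 < x) ∧ IsSumLabeling G L ∧
    L.card = Fintype.card V + k}

/-- The spum of `G`: minimum range over labelings using exactly `σ(G)` extra isolated
vertices. -/
noncomputable def spum {V : Type*} [Fintype V] (G : SimpleGraph V) : ℕ :=
  sInf {d | ∃ L : Finset ℤ, (∀ x ∈ L, 0 < x) ∧ IsSumLabeling G L ∧
    L.card = Fintype.card V + sumNumber G ∧
    ∃ hL : L.Nonempty, (L.max' hL - L.min' hL).toNat = d}

/-- The perfect matching `nK₂`: `n` disjoint edges on `2n` vertices. -/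
def matching (n : ℕ) : SimpleGraph (Fin n × Fin 2) :=
  SimpleGraph.fromRel (fun a b => a.1 = b.1)

/-- `L` induces the `k`-uniform hypergraph with edge set `E` plus isolated vertices. -/
def IsKSumHyperLabeling {V : Type*} (k : ℕ) (E : Finset (Finset V)) (L : Finset ℤ) : Prop :=
  ∃ f : V → ℤ, Function.Injective f ∧ (∀ v, f v ∈ L) ∧
    (∀ A ∈ E, (A.image f).sum id ∈ L) ∧
    (∀ B : Finset ℤ, B ⊆ L → B.card = k → B.sum id ∈ L → ∃ A ∈ E, B = A.image f)

/-- The sum-diameter of a `k`-uniform hypergraph with edge set `E`. -/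
noncomputable def hyperSumDiam {V : Type*} (k : ℕ) (E : Finset (Finset V)) : ℕ :=
  sInf {d | ∃ L : Finset ℤ, (∀ x ∈ L, 0 < x) ∧ IsKSumHyperLabeling k E L ∧
    ∃ hL : L.Nonempty, (L.max' hL - L.min' hL).toNat = d}

open Finset

lemma aux_card_le (T : Finset ℤ) (hT : T.Nonempty) :
    (T.card : ℤ) ≤ T.max' hT - T.min' hT + 1 := by
  have hsub : T ⊆ Finset.Icc (T.min' hT) (T.max' hT) := fun x hx =>
    Finset.mem_Icc.2 ⟨T.min'_le x hx, T.le_max' x hx⟩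
  have h := Finset.card_le_card hsub
  have hmm : T.min' hT ≤ T.max' hT := T.min'_le (T.max' hT) (T.max'_mem hT)
  rw [Int.card_Icc] at h
  omega

lemma aux_sum_distinct_pos (T : Finset ℤ) :
    (∀ x ∈ T, 0 < x) → (T.card : ℤ) * (T.card + 1) ≤ 2 * T.sum id := by
  induction T using Finset.induction_on_max with
  | empty => simp
  | insert a s ha ih =>
    intro h
    have has : a ∉ s := fun hm => lt_irrefl a (ha a hm)
    have hpos : ∀ x ∈ s, 0 < x := fun x hx => h x (mem_insert_of_mem hx)
    have ha1 : 1 ≤ a := h a (mem_insert_self a s)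
    have hsub : s ⊆ Finset.Icc 1 (a - 1) := fun x hx =>
      Finset.mem_Icc.2 ⟨hpos x hx, by have := ha x hx; omega⟩
    have hc := Finset.card_le_card hsub
    rw [Int.card_Icc] at hc
    have hcard : (s.card : ℤ) ≤ a - 1 := by omega
    have ihs := ih hpos
    rw [Finset.sum_insert has, Finset.card_insert_of_notMem has]
    push_cast
    simp only [id] at ihs ⊢
    nlinarith [ihs]


/-- For a `k`-uniform hypergraph (`k ≥ 2`) of order `n` without isolated vertices,
`sd(G) ≥ n + k(k-1)/2 - 1`. -/
theorem stmt19 {V : Type*} [Fintype V] [Nonempty V] (k : ℕ) (hk : 2 ≤ k)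
    (E : Finset (Finset V)) (hcard : ∀ e ∈ E, e.card = k)
    (hiso : ∀ v : V, ∃ e ∈ E, v ∈ e) :
    Fintype.card V + k * (k - 1) / 2 - 1 ≤ hyperSumDiam k E := by
  classical
  set n := Fintype.card V with hn
  have hn1 : 1 ≤ n := Fintype.card_pos
  apply le_csInf
  · -- Nonemptiness: construct an explicit labeling.
    set idx : V → ℕ := fun v => ((Fintype.equivFin V) v : ℕ) with hidxdef
    have hidx : Function.Injective idx := fun a b hab =>
      (Fintype.equivFin V).injective (Fin.ext hab)
    have hidxlt : ∀ v, idx v < n := fun v => ((Fintype.equivFin V) v).isLt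
    set H : ℤ := 2 ^ (n - 1) with hHdef
    have hH : 0 < H := by positivity
    set f : V → ℤ := fun v => 2 * H + 2 ^ (idx v) with hfdef
    have hfinj : Function.Injective f := by
      intro a b hab
      have h2 : (2:ℤ) ^ (idx a) = 2 ^ (idx b) := by
        have : 2 * H + (2:ℤ) ^ (idx a) = 2 * H + 2 ^ (idx b) := hab
        linarith
      have h3 : (2:ℕ) ^ (idx a) = 2 ^ (idx b) := by exact_mod_cast h2
      exact hidx (Nat.pow_right_injective (le_refl 2) h3)
    have hflb : ∀ v, 2 * H + 1 ≤ f v := by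
      intro v
      have h0 : (0:ℤ) < 2 ^ (idx v) := by positivity
      have : (1:ℤ) ≤ 2 ^ (idx v) := h0
      simp only [hfdef]
      linarith
    have hfub : ∀ v, f v ≤ 3 * H := by
      intro v
      have h0 : (2:ℤ) ^ (idx v) ≤ 2 ^ (n - 1) := by
        apply pow_le_pow_right₀ (by norm_num)
        have := hidxlt v; omega
      simp only [hfdef, hHdef]
      linarith
    set sumE : Finset V → ℤ := fun A => (A.image f).sum id with hsumEdef
    have hsumA : ∀ A : Finset V, sumE A = ∑ v ∈ A, f v := by
      intro A
      simp only [hsumEdef]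
      rw [Finset.sum_image (fun x _ y _ h => hfinj h)]
      simp
    set L : Finset ℤ := (Finset.univ.image f) ∪ (E.image sumE) with hLdef
    have hkZ : (2:ℤ) ≤ (k:ℤ) := by exact_mod_cast hk
    have helb : ∀ A ∈ E, (k:ℤ) * (2*H+1) ≤ sumE A := by
      intro A hA
      rw [hsumA]
      have h := Finset.card_nsmul_le_sum A f (2*H+1) (fun v _ => hflb v)
      rwa [hcard A hA, nsmul_eq_mul] at h
    have heub : ∀ A ∈ E, sumE A ≤ (k:ℤ) * (3*H) := by
      intro A hA
      rw [hsumA]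
      have h := Finset.sum_le_card_nsmul A f (3*H) (fun v _ => hfub v)
      rwa [hcard A hA, nsmul_eq_mul] at h
    have hmemL : ∀ x ∈ L, (2*H+1 ≤ x ∧ x ≤ (k:ℤ) * (3*H)) := by
      intro x hx
      rw [hLdef, Finset.mem_union] at hx
      rcases hx with hx | hx
      · obtain ⟨v, -, rfl⟩ := Finset.mem_image.1 hx
        exact ⟨hflb v, by nlinarith [hfub v]⟩
      · obtain ⟨A, hA, rfl⟩ := Finset.mem_image.1 hx
        exact ⟨by nlinarith [helb A hA], heub A hA⟩
    have hfmemL : ∀ v, f v ∈ L :=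
      fun v => Finset.mem_union_left _ (Finset.mem_image_of_mem f (Finset.mem_univ v))
    have hLne : L.Nonempty := ⟨f (Classical.arbitrary V), hfmemL _⟩
    refine ⟨(L.max' hLne - L.min' hLne).toNat, L,
      fun x hx => by have := (hmemL x hx).1; linarith,
      ⟨f, hfinj, hfmemL, fun A hA => Finset.mem_union_right _ (Finset.mem_image_of_mem sumE hA), ?_⟩,
      hLne, rfl⟩
    intro B hBL hBk hBsum
    have hBlb : ∀ x ∈ B, 2*H+1 ≤ x := fun x hx => (hmemL x (hBL hx)).1
    -- Step 1 : B consists only of vertex labels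
    have hBv : B ⊆ Finset.univ.image f := by
      intro x hx
      by_contra hxv
      have hxe : x ∈ E.image sumE := by
        have hxL := hBL hx
        rw [hLdef, Finset.mem_union] at hxL
        tauto
      obtain ⟨A, hA, rfl⟩ := Finset.mem_image.1 hxe
      have hxlb : (k:ℤ)*(2*H+1) ≤ sumE A := helb A hA
      have hBx : B.sum id = sumE A + (B.erase (sumE A)).sum id :=
        (Finset.add_sum_erase B id hx).symm
      have herase : ((k:ℤ)-1) * (2*H+1) ≤ (B.erase (sumE A)).sum id := by
        have h := Finset.card_nsmul_le_sum (B.erase (sumE A)) id (2*H+1)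
          (fun y hy => hBlb y (Finset.mem_of_mem_erase hy))
        rw [Finset.card_erase_of_mem hx, hBk, nsmul_eq_mul] at h
        have hcast : ((k-1:ℕ):ℤ) = (k:ℤ) - 1 := by
          rw [Nat.cast_sub (by omega : 1 ≤ k)]; simp
        rwa [hcast] at h
      have hub := (hmemL _ hBsum).2
      nlinarith [mul_nonneg (by linarith : (0:ℤ) ≤ (k:ℤ) - 2) hH.le]
    -- Step 2 : identify B as the image of a vertex subset S
    set S : Finset V := Finset.univ.filter (fun v => f v ∈ B) with hSdef
    have hBS : B = S.image f := by
      apply Finset.Subset.antisymm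
      · intro x hx
        obtain ⟨v, -, rfl⟩ := Finset.mem_image.1 (hBv hx)
        exact Finset.mem_image_of_mem f (Finset.mem_filter.2 ⟨Finset.mem_univ v, hx⟩)
      · intro x hx
        obtain ⟨v, hv, rfl⟩ := Finset.mem_image.1 hx
        exact (Finset.mem_filter.1 hv).2
    have hScard : S.card = k := by
      have h := Finset.card_image_of_injective S hfinj
      rw [← hBS, hBk] at h
      exact h.symm
    have hBsum_eq : B.sum id = ∑ v ∈ S, f v := by
      rw [hBS, Finset.sum_image (fun x _ y _ h => hfinj h)]
      simp
    -- Step 3 : the sum is an edge label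
    have hBbig : 3*H < B.sum id := by
      have h := Finset.card_nsmul_le_sum B id (2*H+1) hBlb
      rw [hBk, nsmul_eq_mul] at h
      nlinarith
    have hsum_edge : B.sum id ∈ E.image sumE := by
      have hxL := hBsum
      rw [hLdef, Finset.mem_union] at hxL
      rcases hxL with hv | he
      · exfalso
        obtain ⟨v, -, hveq⟩ := Finset.mem_image.1 hv
        have := hfub v
        rw [hveq] at this
        linarith
      · exact he
    obtain ⟨A, hA, hAs⟩ := Finset.mem_image.1 hsum_edge
    refine ⟨A, hA, ?_⟩
    have hAcard : A.card = k := hcard A hA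
    -- Step 4 : S = A
    have hsum2 : ∑ v ∈ S, f v = ∑ v ∈ A, f v := by rw [← hBsum_eq, ← hAs, hsumA]
    have hsplitS : ∑ v ∈ S, f v = (S.card : ℤ) * (2*H) + ∑ v ∈ S, (2:ℤ) ^ idx v := by
      simp only [hfdef, Finset.sum_add_distrib, Finset.sum_const, nsmul_eq_mul]
    have hsplitA : ∑ v ∈ A, f v = (A.card : ℤ) * (2*H) + ∑ v ∈ A, (2:ℤ) ^ idx v := by
      simp only [hfdef, Finset.sum_add_distrib, Finset.sum_const, nsmul_eq_mul]
    have hpow : ∑ v ∈ S, (2:ℤ) ^ idx v = ∑ v ∈ A, (2:ℤ) ^ idx v := by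
      rw [hsplitS, hsplitA, hScard, hAcard] at hsum2
      linarith
    have hnat : ∑ v ∈ S, (2:ℕ) ^ idx v = ∑ v ∈ A, (2:ℕ) ^ idx v := by
      exact_mod_cast hpow
    have himg : ∑ i ∈ S.image idx, (2:ℕ) ^ i = ∑ i ∈ A.image idx, (2:ℕ) ^ i := by
      rw [Finset.sum_image (fun x _ y _ h => hidx h),
        Finset.sum_image (fun x _ y _ h => hidx h)]
      exact hnat
    have himgeq : S.image idx = A.image idx := Finset.geomSum_injective (le_refl 2) himg
    have hSA : S = A := Finset.image_injective hidx himgeq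
    rw [hBS, hSA]
  · -- Lower bound
    rintro d ⟨L, hpos, ⟨f, hfinj, hfmem, hedge, -⟩, hLne, rfl⟩
    obtain ⟨w, -, hw⟩ := Finset.exists_max_image Finset.univ f Finset.univ_nonempty
    set m := L.min' hLne with hm
    set M := L.max' hLne with hM
    set T := Finset.univ.image f with hT
    have hTsub : T ⊆ L := by
      intro x hx
      obtain ⟨v, -, rfl⟩ := Finset.mem_image.1 hx
      exact hfmem v
    have hTne : T.Nonempty := ⟨f (Classical.arbitrary V),
      Finset.mem_image_of_mem f (Finset.mem_univ _)⟩
    have hTcard : T.card = n := by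
      rw [hT, Finset.card_image_of_injective _ hfinj, Finset.card_univ]
    have h1 := aux_card_le T hTne
    have hmaxle : T.max' hTne ≤ f w := by
      apply Finset.max'_le
      intro x hx
      obtain ⟨v, -, rfl⟩ := Finset.mem_image.1 hx
      exact hw v (Finset.mem_univ v)
    have hminge : m ≤ T.min' hTne := L.min'_le _ (hTsub (T.min'_mem hTne))
    have hfw : m + (n:ℤ) - 1 ≤ f w := by
      rw [hTcard] at h1
      linarith
    obtain ⟨A, hA, hwA⟩ := hiso w
    have hAcard : A.card = k := hcard A hA
    have hsumAL : ∑ v ∈ A, f v ∈ L := by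
      have h := hedge A hA
      rw [Finset.sum_image (fun x _ y _ h => hfinj h)] at h
      simpa using h
    have hsumle : ∑ v ∈ A, f v ≤ M := L.le_max' _ hsumAL
    have hsplit : ∑ v ∈ A, f v = f w + ∑ v ∈ A.erase w, f v :=
      (Finset.add_sum_erase A f hwA).symm
    set T' := (A.erase w).image f with hT'
    have hT'card : T'.card = k - 1 := by
      rw [hT', Finset.card_image_of_injective _ hfinj, Finset.card_erase_of_mem hwA, hAcard]
    have hT'pos : ∀ x ∈ T', 0 < x := by
      intro x hx
      obtain ⟨v, -, rfl⟩ := Finset.mem_image.1 hx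
      exact hpos _ (hfmem v)
    have h2 := aux_sum_distinct_pos T' hT'pos
    have hT'sum : T'.sum id = ∑ v ∈ A.erase w, f v := by
      rw [hT', Finset.sum_image (fun x _ y _ h => hfinj h)]
      simp
    rw [hT'card, hT'sum] at h2
    have hcast : ((k-1:ℕ):ℤ) = (k:ℤ) - 1 := by
      rw [Nat.cast_sub (by omega : 1 ≤ k)]; simp
    rw [hcast] at h2
    set q := k*(k-1)/2 with hqdef
    have hq : q * 2 = k*(k-1) := Nat.div_mul_cancel (by
      obtain ⟨j, hj⟩ : ∃ j, k = j + 1 := ⟨k-1, by omega⟩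
      subst hj
      simpa [Nat.mul_comm] using (Nat.even_mul_succ_self j).two_dvd)
    have hq' : (q:ℤ) * 2 = (k:ℤ) * ((k:ℤ)-1) := by
      have := hq
      zify [show 1 ≤ k by omega] at this
      linarith
    have hgoal : m + (n:ℤ) - 1 + (q:ℤ) ≤ M := by
      have hs : (q:ℤ) ≤ ∑ v ∈ A.erase w, f v := by nlinarith
      linarith
    omega
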